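/- Local L^p bound for the Whitney extension: let f ∈ L^p_loc(∂Ω) and let F = ∑_{i,j} f_{U_{i,j}} φ_{i,j} be the Whitney extension, where f_{U_{i,j}} is the ν-average of f over U_{i,j} = B(x̂_{i,j}, r_{i,j}) ∩ ∂Ω and {φ_{i,j}} is a partition of unity with 0 ≤ φ_{i,j} ≤ χ_{2B_{i,j}} and ∑φ_{i,j} = 1 on Ω. Then for each Whitney ball B_{l,m}, ∫_{B_{l,m}} |F|^p dμ ≤ C·2^{lθ} ∫_{U*_{l,m}} |f|^p dν, where U*_{l,m} = B(x̂_{l,m}, 2^8 r_{l,m}) ∩ ∂Ω and C depends only on the structural constants. -/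

import Mathlib

open Metric MeasureTheory ENNReal Set

lemma whitney_holder_avg {X : Type*} [MeasurableSpace X] (ν : Measure X) (U : Set X)
    (f : X → ℝ) (p : ℝ) (hp : 1 ≤ p) (h0 : ν U ≠ 0) (htop : ν U ≠ ⊤)
    (hint : IntegrableOn f U ν) :
    ENNReal.ofReal (|⨍ ξ in U, f ξ ∂ν| ^ p)
      ≤ (ν U)⁻¹ * ∫⁻ ξ in U, ENNReal.ofReal (|f ξ| ^ p) ∂ν := by
  have hp0 : (0:ℝ) < p := lt_of_lt_of_le one_pos hp
  set P : Measure X := (ν U)⁻¹ • ν.restrict U with hP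
  have hPuniv : P univ = 1 := by
    simp [hP, Measure.smul_apply, Measure.restrict_apply_univ,
      ENNReal.inv_mul_cancel h0 htop]
  haveI : IsProbabilityMeasure P := ⟨hPuniv⟩
  have hfP : Integrable f P := by
    refine Integrable.smul_measure hint (ENNReal.inv_ne_top.2 h0)
  have havg : (⨍ ξ in U, f ξ ∂ν) = ∫ ξ, f ξ ∂P := by
    rw [setAverage_eq, integral_smul_measure, ENNReal.toReal_inv, measureReal_def]
  have h1 : ENNReal.ofReal (|⨍ ξ in U, f ξ ∂ν|) ≤ eLpNorm f 1 P := by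
    rw [havg, eLpNorm_one_eq_lintegral_enorm]
    calc ENNReal.ofReal (|∫ ξ, f ξ ∂P|) = (‖∫ ξ, f ξ ∂P‖₊ : ℝ≥0∞) := by
          rw [← enorm_eq_nnnorm, ← ofReal_norm, Real.norm_eq_abs]
      _ ≤ ∫⁻ ξ, ‖f ξ‖₊ ∂P := enorm_integral_le_lintegral_enorm _
  have h2 : eLpNorm f 1 P ≤ eLpNorm f (ENNReal.ofReal p) P :=
    eLpNorm_le_eLpNorm_of_exponent_le (by
      simpa using ENNReal.ofReal_le_ofReal hp) hfP.1
  have hpne : ENNReal.ofReal p ≠ 0 := by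
    simpa [ENNReal.ofReal_eq_zero, not_le] using hp0
  have hLp : eLpNorm f (ENNReal.ofReal p) P
      = (∫⁻ ξ, (‖f ξ‖₊ : ℝ≥0∞) ^ p ∂P) ^ (1/p) := by
    rw [eLpNorm_eq_lintegral_rpow_enorm_toReal hpne (by simp), ENNReal.toReal_ofReal hp0.le]
    simp only [enorm_eq_nnnorm]
  have hmain : ENNReal.ofReal (|⨍ ξ in U, f ξ ∂ν|) ^ p
      ≤ ∫⁻ ξ, (‖f ξ‖₊ : ℝ≥0∞) ^ p ∂P := by
    calc ENNReal.ofReal (|⨍ ξ in U, f ξ ∂ν|) ^ p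
        ≤ ((∫⁻ ξ, (‖f ξ‖₊ : ℝ≥0∞) ^ p ∂P) ^ (1/p)) ^ p := by
          exact ENNReal.rpow_le_rpow ((h1.trans h2).trans hLp.le) hp0.le
      _ = ∫⁻ ξ, (‖f ξ‖₊ : ℝ≥0∞) ^ p ∂P := by
          rw [← ENNReal.rpow_mul, one_div, inv_mul_cancel₀ hp0.ne', ENNReal.rpow_one]
  have hre : ENNReal.ofReal (|⨍ ξ in U, f ξ ∂ν| ^ p)
      = ENNReal.ofReal (|⨍ ξ in U, f ξ ∂ν|) ^ p := by
    rw [← ENNReal.ofReal_rpow_of_nonneg (abs_nonneg _) hp0.le]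
  rw [hre]
  refine hmain.trans ?_
  rw [hP, lintegral_smul_measure]
  refine mul_le_mul_right (lintegral_mono fun ξ => ?_) _
  rw [← enorm_eq_nnnorm, ← ofReal_norm, Real.norm_eq_abs,
    ENNReal.ofReal_rpow_of_nonneg (abs_nonneg _) hp0.le]


lemma whitney_tsum_bound {ι : Type*} (a φz : ι → ℝ) (G : ℝ)
    (hφ : HasSum φz 1) (hb : ∀ i, |a i * φz i| ≤ G * φz i) :
    |∑' i, a i * φz i| ≤ G := by
  have hsumg : Summable (fun i => G * φz i) := hφ.summable.mul_left G
  have hsumt : Summable (fun i => a i * φz i) :=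
    Summable.of_norm_bounded hsumg (fun i => by rw [Real.norm_eq_abs]; exact hb i)
  have habs : Summable (fun i => |a i * φz i|) := hsumt.abs
  have k1 : |∑' i, a i * φz i| ≤ ∑' i, |a i * φz i| := by
    have := norm_tsum_le_tsum_norm (f := fun i => a i * φz i)
      (by simpa only [Real.norm_eq_abs] using habs)
    simpa only [Real.norm_eq_abs] using this
  have k2 : (∑' i, |a i * φz i|) ≤ ∑' i, G * φz i := Summable.tsum_le_tsum hb hsumt.abs hsumg
  have k3 : (∑' i, G * φz i) = G := by rw [tsum_mul_left, hφ.tsum_eq, mul_one]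
  exact (k1.trans k2).trans_eq k3


lemma whitney_dbl_iter {X : Type*} [MetricSpace X] [MeasurableSpace X]
    (ν : Measure X) (S : Set X) (Cd : ℝ≥0∞)
    (hdbl : ∀ (z : X) (ρ : ℝ), 0 < ρ → ν (ball z (2 * ρ) ∩ S) ≤ Cd * ν (ball z ρ ∩ S)) :
    ∀ (n : ℕ) (z : X) (ρ : ℝ), 0 < ρ →
      ν (ball z ((2:ℝ) ^ n * ρ) ∩ S) ≤ Cd ^ n * ν (ball z ρ ∩ S) := by
  intro n
  induction n with
  | zero => intro z ρ hρ; simp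
  | succ n ih =>
    intro z ρ hρ
    have h1 : (2:ℝ) ^ (n+1) * ρ = (2:ℝ) ^ n * (2 * ρ) := by ring
    calc ν (ball z ((2:ℝ) ^ (n+1) * ρ) ∩ S)
        = ν (ball z ((2:ℝ) ^ n * (2 * ρ)) ∩ S) := by rw [h1]
      _ ≤ Cd ^ n * ν (ball z (2 * ρ) ∩ S) := ih z (2 * ρ) (by linarith)
      _ ≤ Cd ^ n * (Cd * ν (ball z ρ ∩ S)) := mul_le_mul_right (hdbl z ρ hρ) _
      _ = Cd ^ (n+1) * ν (ball z ρ ∩ S) := by ring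


set_option maxHeartbeats 1000000 in
/-- Local `L^p` bound for the Whitney extension: for each Whitney ball `B_{l,m}`,
`∫_{B_{l,m}} |F|^p dμ ≤ C 2^{lθ} ∫_{U*_{l,m}} |f|^p dν`, where
`F = ∑ f_{U_{i,j}} φ_{i,j}` is the Whitney extension of `f ∈ L^p_loc(∂Ω)` and
`U*_{l,m} = B(x̂_{l,m}, 2^8 r_{l,m}) ∩ ∂Ω`. -/
theorem whitney_extension_local_Lp_bound
    {X : Type*} [MetricSpace X] [MeasurableSpace X] [BorelSpace X]
    (Ω S : Set X) (μ ν : Measure X)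
    (p θ : ℝ) (hp : 1 ≤ p) (hθ : 0 < θ) (hθp : θ < p)
    (Cs Cd : ℝ≥0∞) (hCs : 1 ≤ Cs) (hCs' : Cs ≠ ⊤) (hCd : 1 ≤ Cd) (hCd' : Cd ≠ ⊤)
    (hdblμ : ∀ (z : X) (ρ : ℝ), 0 < ρ → μ (ball z (2 * ρ)) ≤ Cd * μ (ball z ρ))
    (hdblν : ∀ (z : X) (ρ : ℝ), 0 < ρ → ν (ball z (2 * ρ) ∩ S) ≤ Cd * ν (ball z ρ ∩ S))
    (hzero : μ Ωᶜ = 0)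
    (hcodim : ∀ ζ ∈ S, ∀ ρ : ℝ, 0 < ρ →
      Cs⁻¹ * (μ (ball ζ ρ ∩ Ω) / ENNReal.ofReal (ρ ^ θ)) ≤ ν (ball ζ ρ ∩ S) ∧
      ν (ball ζ ρ ∩ S) ≤ Cs * (μ (ball ζ ρ ∩ Ω) / ENNReal.ofReal (ρ ^ θ)))
    (x xh : ℤ × ℕ → X) (r : ℤ × ℕ → ℝ)
    (hrad : ∀ ij : ℤ × ℕ, (2 : ℝ) ^ (ij.1 - 1) < r ij ∧ r ij ≤ (2 : ℝ) ^ ij.1)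
    (hwhit : ∀ ij, r ij = infDist (x ij) S / 8)
    (hxh : ∀ ij, xh ij ∈ S ∧ dist (x ij) (xh ij) = infDist (x ij) S)
    (hcover : Ω ⊆ ⋃ ij, ball (x ij) (r ij))
    (φ : ℤ × ℕ → X → ℝ)
    (hφ0 : ∀ ij z, 0 ≤ φ ij z)
    (hφ1 : ∀ ij, ∀ z ∉ ball (x ij) (2 * r ij), φ ij z = 0)
    (hφsum : ∀ z ∈ Ω, HasSum (fun ij => φ ij z) 1)
    (hφov : ∀ z : X, {ij : ℤ × ℕ | z ∈ ball (x ij) (2 * r ij)}.Finite)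
    (f : X → ℝ)
    (hf : ∀ ij, IntegrableOn f (ball (xh ij) ((2 : ℝ) ^ 8 * r ij) ∩ S) ν)
    (F : X → ℝ)
    (hF : ∀ z, F z = ∑' ij : ℤ × ℕ, (⨍ ξ in ball (xh ij) (r ij) ∩ S, f ξ ∂ν) * φ ij z) :
    ∃ C : ℝ≥0∞, C ≠ ⊤ ∧ ∀ lm : ℤ × ℕ,
      ∫⁻ z in ball (x lm) (r lm), ENNReal.ofReal (|F z| ^ p) ∂μ
        ≤ C * (2 : ℝ≥0∞) ^ ((lm.1 : ℝ) * θ)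
            * ∫⁻ ξ in ball (xh lm) ((2 : ℝ) ^ 8 * r lm) ∩ S,
                ENNReal.ofReal (|f ξ| ^ p) ∂ν := by
  have hp0 : (0:ℝ) < p := lt_of_lt_of_le one_pos hp
  have hrpos : ∀ ij, 0 < r ij := fun ij =>
    lt_trans (zpow_pos (by norm_num : (0:ℝ) < 2) _) (hrad ij).1
  have hinf : ∀ ij, infDist (x ij) S = 8 * r ij := by
    intro ij; rw [hwhit ij]; ring
  -- the constant
  refine ⟨Cs * Cd ^ 9 * ENNReal.ofReal (((2:ℝ) ^ 8) ^ θ), ?_, ?_⟩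
  · exact ENNReal.mul_ne_top (ENNReal.mul_ne_top hCs' (ENNReal.pow_ne_top hCd')) ofReal_ne_top
  intro lm
  set Rl := r lm with hRl
  have hRlpos : 0 < Rl := hrpos lm
  set Ustar : Set X := ball (xh lm) ((2:ℝ) ^ 8 * Rl) ∩ S with hUstar
  set I : ℝ≥0∞ := ∫⁻ ξ in Ustar, ENNReal.ofReal (|f ξ| ^ p) ∂ν with hI
  set Apow : ℝ≥0∞ := Cd ^ 9 * ((ν Ustar)⁻¹ * I) with hApow
  -- geometry for relevant indices
  have hgeo : ∀ ij : ℤ × ℕ, (ball (x ij) (2 * r ij) ∩ ball (x lm) Rl).Nonempty →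
      (ball (xh ij) (r ij) ∩ S ⊆ Ustar) ∧
      (Ustar ⊆ ball (xh ij) ((2:ℝ) ^ 9 * r ij) ∩ S) := by
    intro ij ⟨w, hw1, hw2⟩
    have hrij : 0 < r ij := hrpos ij
    have hd : dist (x ij) (x lm) < 2 * r ij + Rl := by
      calc dist (x ij) (x lm) ≤ dist (x ij) w + dist w (x lm) := dist_triangle _ _ _
        _ < 2 * r ij + Rl := by
            rw [mem_ball, dist_comm] at hw1
            rw [mem_ball] at hw2
            linarith
    have hlip1 : infDist (x lm) S ≤ infDist (x ij) S + dist (x lm) (x ij) :=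
      infDist_le_infDist_add_dist
    have hlip2 : infDist (x ij) S ≤ infDist (x lm) S + dist (x ij) (x lm) :=
      infDist_le_infDist_add_dist
    rw [hinf, hinf, dist_comm] at hlip1
    rw [hinf, hinf] at hlip2
    have hr1 : Rl ≤ (10/7) * r ij := by linarith
    have hr2 : r ij ≤ (3/2) * Rl := by linarith
    have hdh : dist (xh ij) (xh lm) ≤ 10 * r ij + 9 * Rl := by
      have t1 := (hxh ij).2
      have t2 := (hxh lm).2
      rw [hinf] at t1; rw [hinf] at t2
      calc dist (xh ij) (xh lm)
          ≤ dist (xh ij) (x ij) + dist (x ij) (x lm) + dist (x lm) (xh lm) :=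
            dist_triangle4 _ _ _ _
        _ ≤ 10 * r ij + 9 * Rl := by
            rw [dist_comm (xh ij) (x ij)]
            linarith
    constructor
    · rintro ξ ⟨hξ1, hξ2⟩
      refine ⟨?_, hξ2⟩
      rw [mem_ball] at hξ1 ⊢
      calc dist ξ (xh lm) ≤ dist ξ (xh ij) + dist (xh ij) (xh lm) := dist_triangle _ _ _
        _ < r ij + (10 * r ij + 9 * Rl) := by linarith
        _ ≤ (2:ℝ) ^ 8 * Rl := by nlinarith
    · rintro ξ ⟨hξ1, hξ2⟩
      refine ⟨?_, hξ2⟩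
      rw [mem_ball] at hξ1 ⊢
      calc dist ξ (xh ij) ≤ dist ξ (xh lm) + dist (xh lm) (xh ij) := dist_triangle _ _ _
        _ < (2:ℝ) ^ 8 * Rl + (10 * r ij + 9 * Rl) := by rw [dist_comm] at hdh; linarith
        _ ≤ (2:ℝ) ^ 9 * r ij := by nlinarith
  -- average bound for relevant indices
  have havgb : ∀ ij : ℤ × ℕ, (ball (x ij) (2 * r ij) ∩ ball (x lm) Rl).Nonempty →
      ENNReal.ofReal (|⨍ ξ in ball (xh ij) (r ij) ∩ S, f ξ ∂ν| ^ p) ≤ Apow := by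
    intro ij hne
    obtain ⟨hsub, hsup⟩ := hgeo ij hne
    set U : Set X := ball (xh ij) (r ij) ∩ S with hU
    by_cases h0 : ν U = 0
    · have : (⨍ ξ in U, f ξ ∂ν) = 0 := by simp [setAverage_eq, h0]
      rw [this]
      simp [Real.zero_rpow hp0.ne']
    by_cases htop : ν U = ⊤
    · have : (⨍ ξ in U, f ξ ∂ν) = 0 := by simp [setAverage_eq, htop, measureReal_def]
      rw [this]
      simp [Real.zero_rpow hp0.ne']
    have hint : IntegrableOn f U ν := by
      refine (hf ij).mono_set ?_
      refine inter_subset_inter_left _ (ball_subset_ball ?_)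
      nlinarith [hrpos ij]
    have hcomp : ν Ustar ≤ Cd ^ 9 * ν U := by
      calc ν Ustar ≤ ν (ball (xh ij) ((2:ℝ) ^ 9 * r ij) ∩ S) := measure_mono hsup
        _ ≤ Cd ^ 9 * ν U := whitney_dbl_iter ν S Cd hdblν 9 (xh ij) (r ij) (hrpos ij)
    have hCd9 : (Cd:ℝ≥0∞) ^ 9 ≠ 0 := by
      exact pow_ne_zero _ (fun h => by simp [h] at hCd)
    have hCd9' : (Cd:ℝ≥0∞) ^ 9 ≠ ⊤ := ENNReal.pow_ne_top hCd'
    have hinv : (ν U)⁻¹ ≤ Cd ^ 9 * (ν Ustar)⁻¹ := by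
      have h1 : (Cd ^ 9 * ν U)⁻¹ ≤ (ν Ustar)⁻¹ := ENNReal.inv_le_inv.2 hcomp
      have h2 : (Cd ^ 9 * ν U)⁻¹ = (Cd ^ 9)⁻¹ * (ν U)⁻¹ :=
        ENNReal.mul_inv (Or.inl hCd9) (Or.inl hCd9')
      calc (ν U)⁻¹ = Cd ^ 9 * ((Cd ^ 9)⁻¹ * (ν U)⁻¹) := by
            rw [← mul_assoc, ENNReal.mul_inv_cancel hCd9 hCd9', one_mul]
        _ ≤ Cd ^ 9 * (ν Ustar)⁻¹ := by
            rw [← h2]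
            exact mul_le_mul_right h1 _
    calc ENNReal.ofReal (|⨍ ξ in U, f ξ ∂ν| ^ p)
        ≤ (ν U)⁻¹ * ∫⁻ ξ in U, ENNReal.ofReal (|f ξ| ^ p) ∂ν :=
          whitney_holder_avg ν U f p hp h0 htop hint
      _ ≤ (ν U)⁻¹ * I := by
          refine mul_le_mul_right ?_ _
          exact lintegral_mono' (Measure.restrict_mono hsub le_rfl) le_rfl
      _ ≤ (Cd ^ 9 * (ν Ustar)⁻¹) * I := mul_le_mul_left hinv _
      _ = Apow := by rw [hApow, mul_assoc]
  -- pointwise bound on the Whitney ball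
  have hpt : ∀ z ∈ ball (x lm) Rl ∩ Ω, ENNReal.ofReal (|F z| ^ p) ≤ Apow := by
    intro z hz
    by_cases hAtop : Apow = ⊤
    · rw [hAtop]; exact le_top
    set G : ℝ := Apow.toReal ^ (1/p) with hG
    have hG0 : 0 ≤ G := Real.rpow_nonneg ENNReal.toReal_nonneg _
    have hbound : ∀ ij : ℤ × ℕ,
        |(⨍ ξ in ball (xh ij) (r ij) ∩ S, f ξ ∂ν) * φ ij z| ≤ G * φ ij z := by
      intro ij
      by_cases hφz : φ ij z = 0
      · simp [hφz]
      have hz2 : z ∈ ball (x ij) (2 * r ij) := by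
        by_contra hc
        exact hφz (hφ1 ij z hc)
      have hrel : (ball (x ij) (2 * r ij) ∩ ball (x lm) Rl).Nonempty :=
        ⟨z, hz2, hz.1⟩
      have h1 := havgb ij hrel
      have h2 : |⨍ ξ in ball (xh ij) (r ij) ∩ S, f ξ ∂ν| ^ p ≤ Apow.toReal := by
        have := ENNReal.toReal_mono hAtop h1
        rwa [ENNReal.toReal_ofReal (Real.rpow_nonneg (abs_nonneg _) _)] at this
      have h3 : |⨍ ξ in ball (xh ij) (r ij) ∩ S, f ξ ∂ν| ≤ G := by
        have h4 : (|⨍ ξ in ball (xh ij) (r ij) ∩ S, f ξ ∂ν| ^ p) ^ (1/p)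
            ≤ Apow.toReal ^ (1/p) :=
          Real.rpow_le_rpow (Real.rpow_nonneg (abs_nonneg _) _) h2
            (by positivity)
        rwa [← Real.rpow_mul (abs_nonneg _), mul_one_div, div_self hp0.ne',
          Real.rpow_one] at h4
      rw [abs_mul, abs_of_nonneg (hφ0 ij z)]
      exact mul_le_mul_of_nonneg_right h3 (hφ0 ij z)
    have hFz : |F z| ≤ G := by
      rw [hF z]
      exact whitney_tsum_bound _ _ G (hφsum z hz.2) hbound
    calc ENNReal.ofReal (|F z| ^ p)
        ≤ ENNReal.ofReal (G ^ p) :=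
          ENNReal.ofReal_le_ofReal (Real.rpow_le_rpow (abs_nonneg _) hFz hp0.le)
      _ = Apow := by
          rw [hG, ← Real.rpow_mul ENNReal.toReal_nonneg, one_div,
            inv_mul_cancel₀ hp0.ne', Real.rpow_one, ENNReal.ofReal_toReal hAtop]
  -- integrate the pointwise bound
  have hae : ∀ᵐ z ∂μ.restrict (ball (x lm) Rl), ENNReal.ofReal (|F z| ^ p) ≤ Apow := by
    have hΩ : ∀ᵐ z ∂μ, z ∈ Ω := by
      rw [ae_iff]
      exact hzero
    filter_upwards [ae_restrict_mem measurableSet_ball, ae_restrict_of_ae hΩ]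
      with z hz1 hz2
    exact hpt z ⟨hz1, hz2⟩
  have hstep1 : (∫⁻ z in ball (x lm) Rl, ENNReal.ofReal (|F z| ^ p) ∂μ)
      ≤ Apow * μ (ball (x lm) Rl) := by
    calc (∫⁻ z in ball (x lm) Rl, ENNReal.ofReal (|F z| ^ p) ∂μ)
        ≤ ∫⁻ _ in ball (x lm) Rl, Apow ∂μ := lintegral_mono_ae hae
      _ = Apow * μ (ball (x lm) Rl) := by rw [setLIntegral_const]
  -- measure of the Whitney ball
  have hball : μ (ball (x lm) Rl) ≤ μ (ball (xh lm) ((2:ℝ) ^ 8 * Rl) ∩ Ω) := by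
    have hsub : ball (x lm) Rl ⊆ (ball (xh lm) ((2:ℝ) ^ 8 * Rl) ∩ Ω) ∪ Ωᶜ := by
      intro z hz
      rcases em (z ∈ Ω) with hzΩ | hzΩ
      · left
        refine ⟨?_, hzΩ⟩
        rw [mem_ball] at hz ⊢
        have t2 := (hxh lm).2
        rw [hinf] at t2
        calc dist z (xh lm) ≤ dist z (x lm) + dist (x lm) (xh lm) := dist_triangle _ _ _
          _ < Rl + 8 * Rl := by linarith
          _ ≤ (2:ℝ) ^ 8 * Rl := by nlinarith
      · right; exact hzΩ
    calc μ (ball (x lm) Rl) ≤ μ ((ball (xh lm) ((2:ℝ) ^ 8 * Rl) ∩ Ω) ∪ Ωᶜ) :=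
          measure_mono hsub
      _ ≤ μ (ball (xh lm) ((2:ℝ) ^ 8 * Rl) ∩ Ω) + μ Ωᶜ := measure_union_le _ _
      _ = μ (ball (xh lm) ((2:ℝ) ^ 8 * Rl) ∩ Ω) := by rw [hzero, add_zero]
  -- codimension bound
  have hρpos : (0:ℝ) < (2:ℝ) ^ 8 * Rl := by positivity
  have hco := (hcodim (xh lm) (hxh lm).1 ((2:ℝ) ^ 8 * Rl) hρpos).1
  set e : ℝ≥0∞ := ENNReal.ofReal (((2:ℝ) ^ 8 * Rl) ^ θ) with he
  have he0 : e ≠ 0 := by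
    rw [he]
    simp only [ne_eq, ENNReal.ofReal_eq_zero, not_le]
    exact Real.rpow_pos_of_pos hρpos _
  have hetop : e ≠ ⊤ := ofReal_ne_top
  have hcodim' : μ (ball (xh lm) ((2:ℝ) ^ 8 * Rl) ∩ Ω) ≤ Cs * e * ν Ustar := by
    have hCs0 : Cs ≠ 0 := fun h => by simp [h] at hCs
    have h1 : μ (ball (xh lm) ((2:ℝ) ^ 8 * Rl) ∩ Ω) / e ≤ Cs * ν Ustar := by
      calc μ (ball (xh lm) ((2:ℝ) ^ 8 * Rl) ∩ Ω) / e
          = Cs * (Cs⁻¹ * (μ (ball (xh lm) ((2:ℝ) ^ 8 * Rl) ∩ Ω) / e)) := by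
            rw [← mul_assoc, ENNReal.mul_inv_cancel hCs0 hCs', one_mul]
        _ ≤ Cs * ν Ustar := mul_le_mul_right hco _
    calc μ (ball (xh lm) ((2:ℝ) ^ 8 * Rl) ∩ Ω)
        = μ (ball (xh lm) ((2:ℝ) ^ 8 * Rl) ∩ Ω) / e * e :=
          (ENNReal.div_mul_cancel he0 hetop).symm
      _ ≤ Cs * ν Ustar * e := mul_le_mul_left h1 _
      _ = Cs * e * ν Ustar := by ring
  -- put everything together
  have hfinal : (∫⁻ z in ball (x lm) Rl, ENNReal.ofReal (|F z| ^ p) ∂μ)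
      ≤ Cs * Cd ^ 9 * e * I := by
    calc (∫⁻ z in ball (x lm) Rl, ENNReal.ofReal (|F z| ^ p) ∂μ)
        ≤ Apow * μ (ball (x lm) Rl) := hstep1
      _ ≤ Apow * (Cs * e * ν Ustar) :=
          mul_le_mul_right (hball.trans hcodim') _
      _ = Cs * Cd ^ 9 * e * (((ν Ustar)⁻¹ * ν Ustar) * I) := by
          rw [hApow]; ring
      _ ≤ Cs * Cd ^ 9 * e * (1 * I) := by
          refine mul_le_mul_right (mul_le_mul_left ?_ _) _
          exact ENNReal.inv_mul_le_one _
      _ = Cs * Cd ^ 9 * e * I := by rw [one_mul]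
  refine hfinal.trans ?_
  -- estimate e
  have hee : e ≤ ENNReal.ofReal (((2:ℝ) ^ 8) ^ θ) * (2:ℝ≥0∞) ^ ((lm.1 : ℝ) * θ) := by
    have h1 : ((2:ℝ) ^ 8 * Rl) ^ θ ≤ ((2:ℝ) ^ 8) ^ θ * ((2:ℝ) ^ ((lm.1 : ℝ)))^θ := by
      rw [← Real.mul_rpow (by positivity) (by positivity)]
      refine Real.rpow_le_rpow (by positivity) ?_ hθ.le
      have := (hrad lm).2
      have h2 : (2:ℝ) ^ ((lm.1 : ℝ)) = (2:ℝ) ^ (lm.1 : ℤ) := by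
        rw [← Real.rpow_intCast]
      rw [h2]
      nlinarith
    calc e ≤ ENNReal.ofReal (((2:ℝ) ^ 8) ^ θ * ((2:ℝ) ^ ((lm.1 : ℝ)))^θ) :=
          ENNReal.ofReal_le_ofReal h1
      _ = ENNReal.ofReal (((2:ℝ) ^ 8) ^ θ) * ENNReal.ofReal (((2:ℝ) ^ ((lm.1 : ℝ)))^θ) :=
          ENNReal.ofReal_mul (by positivity)
      _ = ENNReal.ofReal (((2:ℝ) ^ 8) ^ θ) * (2:ℝ≥0∞) ^ ((lm.1 : ℝ) * θ) := by
          rw [← Real.rpow_mul (by norm_num : (0:ℝ) ≤ 2),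
            ← ENNReal.ofReal_rpow_of_pos (by norm_num : (0:ℝ) < 2)]
          norm_num
  calc Cs * Cd ^ 9 * e * I
      ≤ Cs * Cd ^ 9 * (ENNReal.ofReal (((2:ℝ) ^ 8) ^ θ) * (2:ℝ≥0∞) ^ ((lm.1 : ℝ) * θ)) * I := by
        exact mul_le_mul_left (mul_le_mul_right hee _) _
    _ = Cs * Cd ^ 9 * ENNReal.ofReal (((2:ℝ) ^ 8) ^ θ) * (2:ℝ≥0∞) ^ ((lm.1 : ℝ) * θ) * I := by
        ring
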